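/- Let K be a difference field closed under twists and let L be a purely inseparable algebraic field extension of K. Then there is a unique ring endomorphism σ_L of L extending σ, and the difference field (L, σ_L) is again closed under twists. -/
import Mathlib


/-! STATEMENT 4: if `K` is a difference field closed under twists and `L` is a purely
inseparable algebraic field extension of `K`, then `σ` lifts uniquely to `L`, and any
such lift is again closed under twists. -/

/-- A difference field of characteristic exponent `p` is closed under twists if for every
`x` and every `n` the element `σ x` has a `p^n`-th root. -/
def ClosedUnderTwists (p : ℕ) {F : Type*} [Field F] (σ : F →+* F) : Prop :=
  ∀ (x : F) (n : ℕ), ∃ y : F, y ^ p ^ n = σ x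

theorem statement4 {K L : Type*} [Field K] [Field L] (p : ℕ) [ExpChar K p]
    (σ : K →+* K) (hK : ClosedUnderTwists p σ)
    [Algebra K L]
    -- L is a purely inseparable algebraic extension of K
    (hins : ∀ x : L, ∃ n : ℕ, x ^ p ^ n ∈ (algebraMap K L).range) :
    -- σ extends uniquely to an endomorphism of L ...
    (∃! σL : L →+* L, ∀ x : K, σL (algebraMap K L x) = algebraMap K L (σ x)) ∧
    -- ... and any extension of σ to L is closed under twists
    (∀ σL : L →+* L, (∀ x : K, σL (algebraMap K L x) = algebraMap K L (σ x)) →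
      ClosedUnderTwists p σL) := by
  classical
  haveI : ExpChar L p := expChar_of_injective_algebraMap (algebraMap K L).injective p
  set i := algebraMap K L with hi
  have hiinj : Function.Injective i := (algebraMap K L).injective
  have hpinj : ∀ n : ℕ, Function.Injective fun x : L ↦ x ^ p ^ n := fun n =>
    pow_expChar_pow_inj_of_pNilradical_eq_bot L p
      (le_bot_iff.1 (pNilradical_le_nilradical.trans_eq (nilradical_eq_zero L))) n
  have ppL : ∀ (z : L) (n m : ℕ), z ^ p ^ (n + m) = (z ^ p ^ n) ^ p ^ m := by
    intro z n m; rw [← pow_mul, ← pow_add]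
  have ppL' : ∀ (z : L) (n m : ℕ), z ^ p ^ (n + m) = (z ^ p ^ m) ^ p ^ n := by
    intro z n m; rw [Nat.add_comm]; exact ppL z m n
  have ppK : ∀ (z : K) (n m : ℕ), z ^ p ^ (n + m) = (z ^ p ^ n) ^ p ^ m := by
    intro z n m; rw [← pow_mul, ← pow_add]
  have ppK' : ∀ (z : K) (n m : ℕ), z ^ p ^ (n + m) = (z ^ p ^ m) ^ p ^ n := by
    intro z n m; rw [Nat.add_comm]; exact ppK z m n
  -- key: well-defined image
  have key : ∀ x : L, ∃ z : L, ∀ (n : ℕ) (a : K), x ^ p ^ n = i a → z ^ p ^ n = i (σ a) := by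
    intro x
    obtain ⟨n, a, ha⟩ := hins x
    obtain ⟨y, hy⟩ := hK a n
    refine ⟨i y, fun m b hb => ?_⟩
    apply hpinj n
    have hab : a ^ p ^ m = b ^ p ^ n := by
      apply hiinj
      calc i (a ^ p ^ m) = (i a) ^ p ^ m := map_pow i a _
        _ = x ^ p ^ (n + m) := by rw [ha, ← ppL]
        _ = (x ^ p ^ m) ^ p ^ n := ppL' x n m
        _ = (i b) ^ p ^ n := by rw [hb]
        _ = i (b ^ p ^ n) := (map_pow i b _).symm
    show ((i y) ^ p ^ m) ^ p ^ n = (i (σ b)) ^ p ^ n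
    calc ((i y) ^ p ^ m) ^ p ^ n = ((i y) ^ p ^ n) ^ p ^ m := by
          rw [← ppL, ppL']
      _ = i ((y ^ p ^ n) ^ p ^ m) := by rw [map_pow, map_pow]
      _ = i ((σ b) ^ p ^ n) := by rw [hy, ← map_pow, hab, map_pow]
      _ = (i (σ b)) ^ p ^ n := map_pow i _ _
  choose f hf using key
  have hext : ∀ a : K, f (i a) = i (σ a) := by
    intro a
    have := hf (i a) 0 a (by rw [pow_zero, pow_one])
    rwa [pow_zero, pow_one] at this
  have hf1 : f 1 = 1 := by
    have := hext 1; rwa [map_one, map_one, map_one] at this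
  have hmul : ∀ x y : L, f (x * y) = f x * f y := by
    intro x y
    obtain ⟨n, a, ha⟩ := hins x
    obtain ⟨m, b, hb⟩ := hins y
    have h2 := hf x n a ha.symm
    have h3 := hf y m b hb.symm
    apply hpinj (n + m)
    show f (x * y) ^ p ^ (n + m) = (f x * f y) ^ p ^ (n + m)
    have hxy : (x * y) ^ p ^ (n + m) = i (a ^ p ^ m * b ^ p ^ n) := by
      calc (x * y) ^ p ^ (n + m) = (x ^ p ^ n) ^ p ^ m * (y ^ p ^ m) ^ p ^ n := by
            rw [mul_pow, ← ppL, ← ppL']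
        _ = (i a) ^ p ^ m * (i b) ^ p ^ n := by rw [ha, hb]
        _ = i (a ^ p ^ m * b ^ p ^ n) := by rw [map_mul, map_pow, map_pow]
    calc f (x * y) ^ p ^ (n + m) = i (σ (a ^ p ^ m * b ^ p ^ n)) := hf _ _ _ hxy
      _ = (i (σ a)) ^ p ^ m * (i (σ b)) ^ p ^ n := by
          rw [map_mul, map_mul, map_pow, map_pow, map_pow, map_pow]
      _ = (f x ^ p ^ n) ^ p ^ m * (f y ^ p ^ m) ^ p ^ n := by rw [h2, h3]
      _ = (f x * f y) ^ p ^ (n + m) := by rw [mul_pow, ← ppL, ← ppL']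
  have hadd : ∀ x y : L, f (x + y) = f x + f y := by
    intro x y
    obtain ⟨n, a, ha⟩ := hins x
    obtain ⟨m, b, hb⟩ := hins y
    have h2 := hf x n a ha.symm
    have h3 := hf y m b hb.symm
    apply hpinj (n + m)
    show f (x + y) ^ p ^ (n + m) = (f x + f y) ^ p ^ (n + m)
    have hxy : (x + y) ^ p ^ (n + m) = i (a ^ p ^ m + b ^ p ^ n) := by
      calc (x + y) ^ p ^ (n + m) = (x ^ p ^ n) ^ p ^ m + (y ^ p ^ m) ^ p ^ n := by
            rw [add_pow_expChar_pow, ← ppL, ← ppL']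
        _ = (i a) ^ p ^ m + (i b) ^ p ^ n := by rw [ha, hb]
        _ = i (a ^ p ^ m + b ^ p ^ n) := by rw [map_add, map_pow, map_pow]
    calc f (x + y) ^ p ^ (n + m) = i (σ (a ^ p ^ m + b ^ p ^ n)) := hf _ _ _ hxy
      _ = (i (σ a)) ^ p ^ m + (i (σ b)) ^ p ^ n := by
          rw [map_add, map_add, map_pow, map_pow, map_pow, map_pow]
      _ = (f x ^ p ^ n) ^ p ^ m + (f y ^ p ^ m) ^ p ^ n := by rw [h2, h3]
      _ = (f x + f y) ^ p ^ (n + m) := by rw [add_pow_expChar_pow, ← ppL, ← ppL']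
  have hf0 : f 0 = 0 := by
    have := hext 0; rwa [map_zero, map_zero, map_zero] at this
  let σL : L →+* L := ⟨⟨⟨f, hf1⟩, hmul⟩, hf0, hadd⟩
  have hσL : ∀ a : K, σL (i a) = i (σ a) := hext
  have huniq : ∀ τ : L →+* L, (∀ a : K, τ (i a) = i (σ a)) → τ = σL := by
    intro τ hτ
    ext x
    obtain ⟨n, a, ha⟩ := hins x
    apply hpinj n
    show τ x ^ p ^ n = σL x ^ p ^ n
    rw [← map_pow, ← map_pow, ← ha, hτ, hσL]
  refine ⟨⟨σL, hσL, huniq⟩, ?_⟩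
  intro τ hτ x n
  obtain ⟨m, a, ha⟩ := hins x
  obtain ⟨c, hc⟩ := hK a (n + m)
  refine ⟨i c, ?_⟩
  apply hpinj m
  show ((i c) ^ p ^ n) ^ p ^ m = τ x ^ p ^ m
  calc ((i c) ^ p ^ n) ^ p ^ m = i (c ^ p ^ (n + m)) := by
        rw [← ppL, map_pow]
    _ = i (σ a) := by rw [hc]
    _ = τ (i a) := (hτ a).symm
    _ = τ (x ^ p ^ m) := by rw [ha]
    _ = τ x ^ p ^ m := map_pow τ x _
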